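/- Let H ∈ (1/2, 1) and for x ∈ [1/2, 1] let c(x) = -∑_{q,r=0}^{ℓ} α_q α_r |q-r|^{2x}, where α is a filter of order p ≥ 2. Define F_N(x) = (c(x)/2) N^{-2x} - S for a fixed real S. If N > exp( max_{x ∈ [1/2,1]} [ (∑_{q,r} α_q α_r log|q-r| · |q-r|^{2x}) / (∑_{q,r} α_q α_r |q-r|^{2x}) ] ) (with the convention 0·log 0 = 0), then F_N is strictly decreasing on [1/2,1]; hence the equation F_N(x) = 0 has at most one solution in [1/2,1]. -/

import Mathlib

open Finset MeasureTheory Set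



noncomputable def FNauxP (s : Finset ℕ) (a : ℕ → ℝ) (u : ℝ) : ℝ :=
  ∑ q ∈ s, ∑ r ∈ s, a q * a r * Real.exp (-((q : ℝ) - r) ^ 2 * u)

lemma FNauxP_nonneg (s : Finset ℕ) (a : ℕ → ℝ) {u : ℝ} (hu : 0 ≤ u) :
    0 ≤ FNauxP s a u := by
  classical
  set g : ℕ → ℕ → ℝ := fun q n => a q * Real.exp (-(q:ℝ)^2 * u) * (q:ℝ) ^ n with hg
  have key : ∀ q ∈ s, ∀ r ∈ s, a q * a r * Real.exp (-((q : ℝ) - r) ^ 2 * u)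
      = ∑' n : ℕ, (2*u) ^ n / (Nat.factorial n : ℝ) * (g q n * g r n) := by
    intro q _ r _
    have hexp : Real.exp (2*(q:ℝ)*r*u) = ∑' n : ℕ, (2*(q:ℝ)*r*u) ^ n / (Nat.factorial n : ℝ) := by
      rw [Real.exp_eq_exp_ℝ, NormedSpace.exp_eq_tsum_div]
    have hsplit : Real.exp (-((q : ℝ) - r) ^ 2 * u)
        = Real.exp (-(q:ℝ)^2 * u) * Real.exp (-(r:ℝ)^2 * u) * Real.exp (2*(q:ℝ)*r*u) := by
      rw [← Real.exp_add, ← Real.exp_add]; ring_nf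
    rw [hsplit, hexp, ← tsum_mul_left, ← tsum_mul_left]
    apply tsum_congr; intro n
    have : ((2:ℝ)*(q:ℝ)*r*u) ^ n = (2*u)^n * (q:ℝ)^n * (r:ℝ)^n := by
      rw [← mul_pow, ← mul_pow]; ring_nf
    rw [this, hg]; field_simp
  rw [FNauxP]
  calc (0:ℝ) ≤ ∑' n : ℕ, (2*u) ^ n / (Nat.factorial n : ℝ) * (∑ q ∈ s, g q n) ^ 2 := by
        apply tsum_nonneg; intro n
        exact mul_nonneg (div_nonneg (pow_nonneg (by linarith) n) (by positivity)) (sq_nonneg _)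
    _ = ∑ q ∈ s, ∑ r ∈ s, a q * a r * Real.exp (-((q : ℝ) - r) ^ 2 * u) := by
        have hsum : ∀ qr : ℕ × ℕ, qr ∈ s ×ˢ s → Summable (fun n : ℕ =>
            (2*u) ^ n / (Nat.factorial n : ℝ) * (g qr.1 n * g qr.2 n)) := by
          intro qr _
          have h := Real.summable_pow_div_factorial (2*(qr.1:ℝ)*qr.2*u)
          apply ((h.mul_left (a qr.1 * Real.exp (-(qr.1:ℝ)^2 * u) * (a qr.2 * Real.exp (-(qr.2:ℝ)^2 * u)))).congr)
          intro n
          have : ((2:ℝ)*(qr.1:ℝ)*qr.2*u) ^ n = (2*u)^n * (qr.1:ℝ)^n * (qr.2:ℝ)^n := by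
            rw [← mul_pow, ← mul_pow]; ring_nf
          rw [this, hg]; field_simp
        rw [← Finset.sum_product']
        rw [Finset.sum_congr rfl (fun qr hqr => key qr.1 (Finset.mem_product.1 hqr).1 qr.2 (Finset.mem_product.1 hqr).2)]
        rw [← Summable.tsum_finsetSum hsum]
        apply tsum_congr; intro n
        rw [Finset.sum_product' (f := fun q r => (2*u) ^ n / (Nat.factorial n : ℝ) * (g q n * g r n))]
        rw [sq, Finset.sum_mul_sum, Finset.mul_sum]
        exact Finset.sum_congr rfl fun q _ => Finset.mul_sum _ _ _


lemma FNauxP_tendsto (s : Finset ℕ) (a : ℕ → ℝ) :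
    Filter.Tendsto (FNauxP s a) Filter.atTop (nhds (∑ q ∈ s, a q ^ 2)) := by
  classical
  have : ∀ q ∈ s, Filter.Tendsto (fun u => ∑ r ∈ s, a q * a r * Real.exp (-((q : ℝ) - r) ^ 2 * u))
      Filter.atTop (nhds (a q ^ 2)) := by
    intro q hq
    have : Filter.Tendsto (fun u => ∑ r ∈ s, a q * a r * Real.exp (-((q : ℝ) - r) ^ 2 * u))
        Filter.atTop (nhds (∑ r ∈ s, if r = q then a q ^2 else 0)) := by
      apply tendsto_finset_sum
      intro r hr
      by_cases hrq : r = q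
      · subst hrq
        rw [if_pos rfl]
        have : (fun u : ℝ => a r * a r * Real.exp (-((r : ℝ) - r) ^ 2 * u)) = fun _ => a r ^2 := by
          funext u; simp [sq]
        rw [this]; exact tendsto_const_nhds
      · simp only [if_neg hrq]
        have hpos : 0 < ((q : ℝ) - r) ^ 2 := by
          have : (q : ℝ) ≠ r := by
            simp only [ne_eq, Nat.cast_inj]; exact fun h => hrq (h.symm)
          have h0 := sub_ne_zero_of_ne this
          exact lt_of_le_of_ne (sq_nonneg _) (Ne.symm (pow_ne_zero 2 h0))
        have h1 : Filter.Tendsto (fun u : ℝ => Real.exp (-((q : ℝ) - r) ^ 2 * u))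
            Filter.atTop (nhds 0) := by
          apply Real.tendsto_exp_atBot.comp
          exact Filter.Tendsto.const_mul_atTop_of_neg (by linarith) Filter.tendsto_id
        have := h1.const_mul (a q * a r)
        simpa using this
    simpa [Finset.sum_ite_eq' s q (fun r => a q ^2), hq] using this
  have h2 := tendsto_finset_sum s this
  exact h2

lemma FNauxP_lower (s : Finset ℕ) (a : ℕ → ℝ) (h : ∃ q ∈ s, a q ≠ 0) :
    ∃ c : ℝ, 1 ≤ c ∧ ∃ ε : ℝ, 0 < ε ∧ ∀ u ∈ Icc c (c+1), ε ≤ FNauxP s a u := by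
  classical
  obtain ⟨q0, hq0, hq0ne⟩ := h
  set L := ∑ q ∈ s, a q ^ 2 with hL
  have hLpos : 0 < L := by
    apply Finset.sum_pos' (fun q _ => sq_nonneg _) ⟨q0, hq0, by positivity⟩
  have hev : ∀ᶠ u in Filter.atTop, L/2 < FNauxP s a u :=
    (FNauxP_tendsto s a).eventually (eventually_gt_nhds (by linarith : L/2 < L))
  obtain ⟨c0, hc0⟩ := Filter.eventually_atTop.mp hev
  refine ⟨max c0 1, le_max_right _ _, L/2, by linarith, ?_⟩
  intro u hu
  exact le_of_lt (hc0 u (le_trans (le_max_left _ _) hu.1))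


noncomputable def FNauxK (x : ℝ) : ℝ := ∫ u in Ioi (0:ℝ), (1 - Real.exp (-u)) * u ^ (-1-x)

lemma FNaux_cont_kernel (a x : ℝ) :
    ContinuousOn (fun u : ℝ => (1 - Real.exp (-(a*u))) * u ^ (-1-x)) (Ioi (0:ℝ)) := by
  apply ContinuousOn.mul
  · exact (continuous_const.sub ((Real.continuous_exp.comp (continuous_const.mul continuous_id).neg))).continuousOn
  · exact ContinuousOn.rpow_const continuousOn_id (fun u hu => Or.inl (ne_of_gt hu))

lemma FNaux_kernel_nonneg (a x : ℝ) (ha : 0 ≤ a) {u : ℝ} (hu : 0 < u) :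
    0 ≤ (1 - Real.exp (-(a*u))) * u ^ (-1-x) := by
  apply mul_nonneg
  · have : Real.exp (-(a*u)) ≤ 1 := Real.exp_le_one_iff.mpr (by nlinarith)
    linarith
  · positivity

lemma FNaux_kernel_integrable {x : ℝ} (hx : 0 < x) (hx1 : x < 1) :
    IntegrableOn (fun u : ℝ => (1 - Real.exp (-u)) * u ^ (-1-x)) (Ioi (0:ℝ)) := by
  have hmeas : AEStronglyMeasurable (fun u : ℝ => (1 - Real.exp (-u)) * u ^ (-1-x))
      (volume.restrict (Ioi (0:ℝ))) := by
    have := FNaux_cont_kernel 1 x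
    simp only [one_mul] at this
    exact this.aestronglyMeasurable measurableSet_Ioi
  rw [show Set.Ioi (0:ℝ) = Set.Ioc 0 1 ∪ Set.Ioi 1 by
    rw [Set.Ioc_union_Ioi_eq_Ioi]; norm_num]
  apply IntegrableOn.union
  · -- on Ioc 0 1, bound by u^(-x)
    have hint : IntegrableOn (fun u : ℝ => u ^ (-x)) (Ioc (0:ℝ) 1) := by
      have := intervalIntegral.intervalIntegrable_rpow' (a := 0) (b := 1) (r := -x) (by linarith)
      rwa [intervalIntegrable_iff_integrableOn_Ioc_of_le (by norm_num)] at this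
    apply hint.integrable.mono' (hmeas.mono_set (Set.Ioc_subset_Ioi_self))
    filter_upwards [ae_restrict_mem measurableSet_Ioc] with u hu
    have hu0 : 0 < u := hu.1
    rw [Real.norm_eq_abs, abs_of_nonneg (by simpa using FNaux_kernel_nonneg 1 x zero_le_one hu0)]
    have h1 : 1 - Real.exp (-u) ≤ u := by nlinarith [Real.add_one_le_exp (-u)]
    have h2 : (0:ℝ) < u ^ (-1-x) := Real.rpow_pos_of_pos hu0 _
    calc (1 - Real.exp (-u)) * u ^ (-1-x) ≤ u * u ^ (-1-x) :=
          mul_le_mul_of_nonneg_right h1 (le_of_lt h2)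
      _ = u ^ (-x) := by
          rw [← Real.rpow_one_add' (le_of_lt hu0) (show (1:ℝ) + (-1-x) ≠ 0 by intro h; linarith)]
          ring_nf
  · -- on Ioi 1, bound by u^(-1-x)
    have hint : IntegrableOn (fun u : ℝ => u ^ (-1-x)) (Ioi (1:ℝ)) :=
      integrableOn_Ioi_rpow_of_lt (by linarith) one_pos
    apply hint.integrable.mono' (hmeas.mono_set (Set.Ioi_subset_Ioi (by norm_num)))
    filter_upwards [ae_restrict_mem measurableSet_Ioi] with u hu
    have hu0 : (0:ℝ) < u := lt_trans one_pos hu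
    rw [Real.norm_eq_abs, abs_of_nonneg (by simpa using FNaux_kernel_nonneg 1 x zero_le_one hu0)]
    have h2 : (0:ℝ) < u ^ (-1-x) := Real.rpow_pos_of_pos hu0 _
    nlinarith [Real.exp_pos (-u)]



lemma FNaux_scaled_integrable {x : ℝ} (hx : 0 < x) (hx1 : x < 1) {a : ℝ} (ha : 0 ≤ a) :
    IntegrableOn (fun u : ℝ => (1 - Real.exp (-(a*u))) * u ^ (-1-x)) (Set.Ioi (0:ℝ)) := by
  rcases eq_or_lt_of_le ha with h0 | hapos
  · have : (fun u : ℝ => (1 - Real.exp (-(a*u))) * u ^ (-1-x)) = fun _ => 0 := by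
      funext u; rw [← h0]; simp
    rw [this]; exact (integrableOn_const_iff (C := (0:ℝ))).mpr (Or.inl (by simp))
  · have heq : EqOn (fun u : ℝ => (1 - Real.exp (-(a*u))) * u ^ (-1-x))
        (fun u : ℝ => a ^ (1+x) * ((1 - Real.exp (-(a*u))) * (a*u) ^ (-1-x))) (Set.Ioi (0:ℝ)) := by
      intro u hu
      simp only
      rw [Real.mul_rpow (le_of_lt hapos) (le_of_lt (mem_Ioi.mp hu))]
      rw [show a ^ (1+x) * ((1 - Real.exp (-(a*u))) * (a ^ (-1-x) * u ^ (-1-x)))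
        = (a ^ (1+x) * a ^ (-1-x)) * ((1 - Real.exp (-(a*u))) * u ^ (-1-x)) by ring]
      rw [← Real.rpow_add hapos]
      norm_num
    apply (IntegrableOn.congr_fun _ heq.symm measurableSet_Ioi)
    apply Integrable.const_mul
    have := (integrableOn_Ioi_comp_mul_left_iff
      (fun v : ℝ => (1 - Real.exp (-v)) * v ^ (-1-x)) 0 hapos).mpr
    simp only [mul_zero] at this
    exact this (FNaux_kernel_integrable hx hx1)

lemma FNaux_scaled_integral {x : ℝ} (hx : 0 < x) (hx1 : x < 1) {a : ℝ} (ha : 0 < a) :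
    ∫ u in Set.Ioi (0:ℝ), (1 - Real.exp (-(a*u))) * u ^ (-1-x) = a ^ x * FNauxK x := by
  have heq : EqOn (fun u : ℝ => (1 - Real.exp (-(a*u))) * u ^ (-1-x))
      (fun u : ℝ => a ^ (1+x) * ((1 - Real.exp (-(a*u))) * (a*u) ^ (-1-x))) (Set.Ioi (0:ℝ)) := by
    intro u hu
    simp only
    rw [Real.mul_rpow (le_of_lt ha) (le_of_lt (mem_Ioi.mp hu))]
    rw [show a ^ (1+x) * ((1 - Real.exp (-(a*u))) * (a ^ (-1-x) * u ^ (-1-x)))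
      = (a ^ (1+x) * a ^ (-1-x)) * ((1 - Real.exp (-(a*u))) * u ^ (-1-x)) by ring]
    rw [← Real.rpow_add ha]
    norm_num
  rw [setIntegral_congr_fun measurableSet_Ioi heq]
  rw [integral_const_mul]
  have := integral_comp_mul_left_Ioi (fun v : ℝ => (1 - Real.exp (-v)) * v ^ (-1-x)) 0 ha
  simp only [mul_zero] at this
  rw [this, FNauxK, smul_eq_mul]
  rw [show a ^ (1+x) * (a⁻¹ * ∫ u in Set.Ioi (0:ℝ), (1 - Real.exp (-u)) * u ^ (-1-x))
    = (a ^ (1+x) * a⁻¹) * ∫ u in Set.Ioi (0:ℝ), (1 - Real.exp (-u)) * u ^ (-1-x) by ring]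
  congr 1
  rw [← Real.rpow_neg_one a, ← Real.rpow_add ha]
  norm_num

lemma FNaux_rep {x : ℝ} (hx : 0 < x) (hx1 : x < 1) (t : ℝ) :
    |t| ^ (2*x) * FNauxK x
      = ∫ u in Set.Ioi (0:ℝ), (1 - Real.exp (-(t^2*u))) * u ^ (-1-x) := by
  rcases eq_or_ne t 0 with rfl | ht
  · simp [Real.zero_rpow (by positivity : 2*x ≠ 0)]
  · have ht2 : (0:ℝ) < t^2 := by positivity
    rw [FNaux_scaled_integral hx hx1 ht2]
    congr 1
    rw [show (2:ℝ)*x = (2:ℕ)*x by norm_num, Real.rpow_natCast_mul (abs_nonneg t)]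
    rw [sq_abs]


lemma FNauxK_pos {x : ℝ} (hx : 0 < x) (hx1 : x < 1) : 0 < FNauxK x := by
  rw [FNauxK]
  rw [setIntegral_pos_iff_support_of_nonneg_ae]
  · apply lt_of_lt_of_le _ (measure_mono (inter_subset_inter_left _ (subset_refl _)))
    · show (0:ENNReal) < volume (Function.support (fun u : ℝ => (1 - Real.exp (-u)) * u ^ (-1-x)) ∩ Set.Ioi 0)
      have hsub : Set.Ioi (0:ℝ) ⊆ Function.support (fun u : ℝ => (1 - Real.exp (-u)) * u ^ (-1-x)) := by
        intro u hu
        have hu0 : (0:ℝ) < u := hu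
        have h1 : 0 < 1 - Real.exp (-u) := by
          have : Real.exp (-u) < 1 := Real.exp_lt_one_iff.mpr (by linarith)
          linarith
        have h2 : (0:ℝ) < u ^ (-1-x) := Real.rpow_pos_of_pos hu0 _
        exact ne_of_gt (mul_pos h1 h2)
      have : Set.Ioi (0:ℝ) ⊆ Function.support (fun u : ℝ => (1 - Real.exp (-u)) * u ^ (-1-x)) ∩ Set.Ioi 0 :=
        fun u hu => ⟨hsub hu, hu⟩
      calc (0:ENNReal) < volume (Set.Ioi (0:ℝ)) := by simp
        _ ≤ _ := measure_mono this
  · filter_upwards [ae_restrict_mem measurableSet_Ioi] with u hu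
    have hu0 : (0:ℝ) < u := hu
    have : Real.exp (-u) ≤ 1 := Real.exp_le_one_iff.mpr (by linarith)
    have h2 : (0:ℝ) ≤ u ^ (-1-x) := le_of_lt (Real.rpow_pos_of_pos hu0 _)
    exact mul_nonneg (by linarith) h2
  · exact FNaux_kernel_integrable hx hx1

lemma FNauxK_le {x : ℝ} (hx : (1:ℝ)/2 ≤ x) (hx1 : x < 1) : FNauxK x ≤ 3 / (1-x) := by
  have hx0 : 0 < x := by linarith
  have hsplit : Set.Ioi (0:ℝ) = Set.Ioc 0 1 ∪ Set.Ioi 1 := by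
    rw [Set.Ioc_union_Ioi_eq_Ioi]; norm_num
  have hint := FNaux_kernel_integrable hx0 hx1
  have hint1 : IntegrableOn (fun u : ℝ => (1 - Real.exp (-u)) * u ^ (-1-x)) (Set.Ioc (0:ℝ) 1) :=
    hint.mono_set (by rw [hsplit]; exact subset_union_left)
  have hint2 : IntegrableOn (fun u : ℝ => (1 - Real.exp (-u)) * u ^ (-1-x)) (Set.Ioi (1:ℝ)) :=
    hint.mono_set (by rw [hsplit]; exact subset_union_right)
  have hdisj : Disjoint (Set.Ioc (0:ℝ) 1) (Set.Ioi (1:ℝ)) := by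
    apply Set.disjoint_left.mpr
    intro u hu hu'
    exact absurd hu.2 (not_le.mpr hu')
  rw [FNauxK, hsplit, setIntegral_union hdisj measurableSet_Ioi hint1 hint2]
  -- bound first piece by 1/(1-x), second by 2
  have hb1 : ∫ u in Set.Ioc (0:ℝ) 1, (1 - Real.exp (-u)) * u ^ (-1-x) ≤ 1/(1-x) := by
    have hmono : ∫ u in Set.Ioc (0:ℝ) 1, (1 - Real.exp (-u)) * u ^ (-1-x)
        ≤ ∫ u in Set.Ioc (0:ℝ) 1, u ^ (-x) := by
      apply setIntegral_mono_on hint1 _ measurableSet_Ioc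
      · intro u hu
        have hu0 : 0 < u := hu.1
        have h1 : 1 - Real.exp (-u) ≤ u := by nlinarith [Real.add_one_le_exp (-u)]
        have h2 : (0:ℝ) < u ^ (-1-x) := Real.rpow_pos_of_pos hu0 _
        calc (1 - Real.exp (-u)) * u ^ (-1-x) ≤ u * u ^ (-1-x) :=
              mul_le_mul_of_nonneg_right h1 (le_of_lt h2)
          _ = u ^ (-x) := by
              rw [← Real.rpow_one_add' (le_of_lt hu0) (show (1:ℝ) + (-1-x) ≠ 0 by intro h; linarith)]
              ring_nf
      · have := intervalIntegral.intervalIntegrable_rpow' (a := 0) (b := 1) (r := -x) (by linarith)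
        rwa [intervalIntegrable_iff_integrableOn_Ioc_of_le (by norm_num)] at this
    have hval : ∫ u in Set.Ioc (0:ℝ) 1, u ^ (-x) = 1/(1-x) := by
      rw [← intervalIntegral.integral_of_le (by norm_num : (0:ℝ) ≤ 1)]
      rw [integral_rpow (Or.inl (by linarith))]
      rw [Real.one_rpow, Real.zero_rpow (show -x + 1 ≠ 0 by intro h; linarith)]
      field_simp
      ring_nf
    linarith
  have hb2 : ∫ u in Set.Ioi (1:ℝ), (1 - Real.exp (-u)) * u ^ (-1-x) ≤ 2 := by
    have hmono : ∫ u in Set.Ioi (1:ℝ), (1 - Real.exp (-u)) * u ^ (-1-x)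
        ≤ ∫ u in Set.Ioi (1:ℝ), u ^ (-1-x) := by
      apply setIntegral_mono_on hint2 (integrableOn_Ioi_rpow_of_lt (by linarith) one_pos) measurableSet_Ioi
      intro u hu
      have hu0 : (0:ℝ) < u := lt_trans one_pos hu
      have h2 : (0:ℝ) < u ^ (-1-x) := Real.rpow_pos_of_pos hu0 _
      nlinarith [Real.exp_pos (-u)]
    have hval : ∫ u in Set.Ioi (1:ℝ), u ^ (-1-x) = 1/x := by
      rw [integral_Ioi_rpow_of_lt (by linarith) one_pos]
      rw [Real.one_rpow, show (-1:ℝ)-x+1 = -x by ring]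
      field_simp
    have : (1:ℝ)/x ≤ 2 := by
      rw [div_le_iff₀ hx0]; linarith
    linarith
  have h3 : (1:ℝ)/(1-x) + 2 ≤ 3/(1-x) := by
    have h4 : (0:ℝ) < 1 - x := by linarith
    rw [div_add' _ _ _ (ne_of_gt h4), div_le_div_iff₀ h4 h4]
    nlinarith
  linarith


lemma FNaux_prodsum_zero (s : Finset ℕ) (a : ℕ → ℝ) (hsum0 : ∑ q ∈ s, a q = 0) :
    ∑ qr ∈ s ×ˢ s, a qr.1 * a qr.2 = 0 := by
  rw [Finset.sum_product (f := fun qr : ℕ × ℕ => a qr.1 * a qr.2),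
    ← Finset.sum_mul_sum s s (fun q => a q) (fun r => a r), hsum0, zero_mul]

lemma FNaux_pointwise (s : Finset ℕ) (a : ℕ → ℝ) (hsum0 : ∑ q ∈ s, a q = 0)
    (x u : ℝ) :
    ∑ qr ∈ s ×ˢ s, (a qr.1 * a qr.2) * ((1 - Real.exp (-((((qr.1:ℝ) - qr.2)^2)*u))) * u ^ (-1-x))
      = -(FNauxP s a u * u ^ (-1-x)) := by
  have expand : ∀ qr : ℕ × ℕ,
      (a qr.1 * a qr.2) * ((1 - Real.exp (-((((qr.1:ℝ) - qr.2)^2)*u))) * u ^ (-1-x))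
      = (a qr.1 * a qr.2) * u ^ (-1-x)
        - (a qr.1 * a qr.2 * Real.exp (-((qr.1:ℝ) - qr.2) ^ 2 * u)) * u ^ (-1-x) := by
    intro qr
    have h : -((((qr.1:ℝ) - qr.2)^2)*u) = -((qr.1:ℝ) - qr.2) ^ 2 * u := by ring
    rw [h]; ring
  rw [Finset.sum_congr rfl (fun qr _ => expand qr), Finset.sum_sub_distrib,
    ← Finset.sum_mul, FNaux_prodsum_zero s a hsum0, zero_mul, zero_sub, ← Finset.sum_mul]
  rw [FNauxP, ← Finset.sum_product (f := fun qr : ℕ × ℕ =>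
    a qr.1 * a qr.2 * Real.exp (-((qr.1:ℝ) - qr.2) ^ 2 * u))]

lemma FNauxPw_integrable (s : Finset ℕ) (a : ℕ → ℝ) (hsum0 : ∑ q ∈ s, a q = 0)
    {x : ℝ} (hx : 0 < x) (hx1 : x < 1) :
    IntegrableOn (fun u : ℝ => FNauxP s a u * u ^ (-1-x)) (Set.Ioi (0:ℝ)) := by
  have heach : ∀ qr : ℕ × ℕ, qr ∈ s ×ˢ s → IntegrableOn (fun u : ℝ =>
      (-(a qr.1 * a qr.2)) * ((1 - Real.exp (-((((qr.1:ℝ) - qr.2)^2)*u))) * u ^ (-1-x))) (Set.Ioi (0:ℝ)) :=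
    fun qr _ => (FNaux_scaled_integrable hx hx1 (sq_nonneg _)).const_mul _
  have hint : IntegrableOn (fun u : ℝ => ∑ qr ∈ s ×ˢ s,
      (-(a qr.1 * a qr.2)) * ((1 - Real.exp (-((((qr.1:ℝ) - qr.2)^2)*u))) * u ^ (-1-x)))
      (Set.Ioi (0:ℝ)) := integrable_finset_sum _ heach
  apply hint.congr_fun _ measurableSet_Ioi
  intro u hu
  simp only [neg_mul, Finset.sum_neg_distrib]
  rw [FNaux_pointwise s a hsum0 x u]
  simp

lemma FNauxB_eq (s : Finset ℕ) (a : ℕ → ℝ) (hsum0 : ∑ q ∈ s, a q = 0)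
    {x : ℝ} (hx : 0 < x) (hx1 : x < 1) :
    ∑ q ∈ s, ∑ r ∈ s, a q * a r * |(q : ℝ) - (r : ℝ)| ^ (2 * x)
      = -(FNauxK x)⁻¹ * ∫ u in Set.Ioi (0:ℝ), FNauxP s a u * u ^ (-1-x) := by
  have hK := FNauxK_pos hx hx1
  have hrep : ∀ qr : ℕ × ℕ, a qr.1 * a qr.2 * |(qr.1 : ℝ) - (qr.2 : ℝ)| ^ (2 * x)
      = (FNauxK x)⁻¹ * ∫ u in Set.Ioi (0:ℝ),
          (a qr.1 * a qr.2) * ((1 - Real.exp (-((((qr.1:ℝ) - qr.2)^2)*u))) * u ^ (-1-x)) := by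
    intro qr
    rw [integral_const_mul, ← FNaux_rep hx hx1 ((qr.1:ℝ) - qr.2)]
    field_simp
  rw [← Finset.sum_product (f := fun qr : ℕ × ℕ => a qr.1 * a qr.2 * |(qr.1 : ℝ) - (qr.2 : ℝ)| ^ (2 * x))]
  rw [Finset.sum_congr rfl (fun qr _ => hrep qr)]
  rw [← Finset.mul_sum]
  have heach : ∀ qr : ℕ × ℕ, qr ∈ s ×ˢ s → IntegrableOn (fun u : ℝ =>
      (a qr.1 * a qr.2) * ((1 - Real.exp (-((((qr.1:ℝ) - qr.2)^2)*u))) * u ^ (-1-x))) (Set.Ioi (0:ℝ)) :=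
    fun qr _ => (FNaux_scaled_integrable hx hx1 (sq_nonneg _)).const_mul _
  rw [← integral_finset_sum _ heach]
  rw [setIntegral_congr_fun measurableSet_Ioi (fun u _ => FNaux_pointwise s a hsum0 x u)]
  rw [integral_neg]
  ring


lemma FNauxB_bound (s : Finset ℕ) (a : ℕ → ℝ) (hsum0 : ∑ q ∈ s, a q = 0)
    (hex : ∃ q ∈ s, a q ≠ 0) :
    ∃ δ : ℝ, 0 < δ ∧ ∀ x : ℝ, 1/2 ≤ x → x < 1 →
      (∑ q ∈ s, ∑ r ∈ s, a q * a r * |(q : ℝ) - (r : ℝ)| ^ (2 * x)) ≤ -(δ * (1-x)) := by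
  obtain ⟨c, hc1, ε, hε, hP⟩ := FNauxP_lower s a hex
  have hc0 : (0:ℝ) < c := by linarith
  have hc10 : (0:ℝ) < c + 1 := by linarith
  set δ' : ℝ := ε * (c+1) ^ (-(2:ℝ)) with hδ'
  have hδ'pos : 0 < δ' := mul_pos hε (Real.rpow_pos_of_pos hc10 _)
  refine ⟨δ'/3, by positivity, ?_⟩
  intro x hx hx1
  have hx0 : (0:ℝ) < x := by linarith
  -- lower bound for J
  have hJ : δ' ≤ ∫ u in Set.Ioi (0:ℝ), FNauxP s a u * u ^ (-1-x) := by
    have hsub : Set.Ioc c (c+1) ⊆ Set.Ioi (0:ℝ) := fun u hu => lt_of_lt_of_le hc0 (le_of_lt hu.1)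
    have hstep1 : ∫ u in Set.Ioc c (c+1), FNauxP s a u * u ^ (-1-x)
        ≤ ∫ u in Set.Ioi (0:ℝ), FNauxP s a u * u ^ (-1-x) := by
      apply setIntegral_mono_set (FNauxPw_integrable s a hsum0 hx0 hx1)
      · filter_upwards [ae_restrict_mem measurableSet_Ioi] with u hu
        exact mul_nonneg (FNauxP_nonneg s a (le_of_lt hu)) (le_of_lt (Real.rpow_pos_of_pos hu _))
      · exact HasSubset.Subset.eventuallyLE hsub
    have hstep2 : δ' ≤ ∫ u in Set.Ioc c (c+1), FNauxP s a u * u ^ (-1-x) := by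
      have hconst : ∫ u in Set.Ioc c (c+1), δ' = δ' := by
        rw [setIntegral_const, Real.volume_real_Ioc]
        rw [show c + 1 - c = 1 by ring]
        simp
      rw [← hconst]
      apply setIntegral_mono_on
      · exact integrableOn_const (by rw [Real.volume_Ioc]; exact ENNReal.ofReal_ne_top)
      · exact (FNauxPw_integrable s a hsum0 hx0 hx1).mono_set hsub
      · exact measurableSet_Ioc
      · intro u hu
        have hu0 : 0 < u := lt_of_lt_of_le hc0 (le_of_lt hu.1)
        have h1 : ε ≤ FNauxP s a u := hP u ⟨le_of_lt hu.1, hu.2⟩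
        have h2 : (c+1) ^ (-(2:ℝ)) ≤ u ^ (-1-x) := by
          calc (c+1) ^ (-(2:ℝ)) ≤ (c+1) ^ (-1-x) :=
                Real.rpow_le_rpow_of_exponent_le (by linarith) (by linarith)
            _ ≤ u ^ (-1-x) :=
                Real.rpow_le_rpow_of_nonpos hu0 hu.2 (by linarith)
        calc δ' = ε * (c+1) ^ (-(2:ℝ)) := rfl
          _ ≤ FNauxP s a u * u ^ (-1-x) :=
              mul_le_mul h1 h2 (le_of_lt (Real.rpow_pos_of_pos hc10 _)) (FNauxP_nonneg s a (le_of_lt hu0))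
    linarith
  -- combine with K bounds
  have hK := FNauxK_pos hx0 hx1
  have hKle := FNauxK_le hx hx1
  have h1x : (0:ℝ) < 1 - x := by linarith
  have hKinv : (1-x)/3 ≤ (FNauxK x)⁻¹ := by
    rw [show (1-x)/3 = (3/(1-x))⁻¹ by field_simp]
    exact inv_anti₀ hK hKle
  rw [FNauxB_eq s a hsum0 hx0 hx1]
  have hprod : (1-x)/3 * δ' ≤ (FNauxK x)⁻¹ * ∫ u in Set.Ioi (0:ℝ), FNauxP s a u * u ^ (-1-x) :=
    mul_le_mul hKinv hJ (le_of_lt hδ'pos) (le_of_lt (lt_of_lt_of_le (by positivity) hKinv))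
  have : δ'/3 * (1-x) = (1-x)/3 * δ' := by ring
  linarith


lemma FNaux_hasDerivAt_pow (b : ℝ) (hb : 0 ≤ b) {x : ℝ} (hx : 0 < x) :
    HasDerivAt (fun y : ℝ => b ^ (2*y)) (2 * Real.log b * b ^ (2*x)) x := by
  rcases eq_or_lt_of_le hb with h0 | hbpos
  · have hev : (fun y : ℝ => b ^ (2*y)) =ᶠ[nhds x] (fun _ => (0:ℝ)) := by
      filter_upwards [eventually_gt_nhds hx] with y hy
      rw [← h0, Real.zero_rpow (by positivity)]
    have h1 : HasDerivAt (fun y : ℝ => b ^ (2*y)) 0 x :=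
      (hasDerivAt_const x 0).congr_of_eventuallyEq hev
    have h2 : 2 * Real.log b * b ^ (2*x) = 0 := by
      rw [← h0, Real.zero_rpow (by positivity : 2*x ≠ 0)]; ring
    rw [h2]; exact h1
  · have heq : (fun y : ℝ => b ^ (2*y)) = fun y : ℝ => Real.exp ((2*y) * Real.log b) := by
      funext y; rw [Real.rpow_def_of_pos hbpos]; ring_nf
    rw [heq]
    have h1 : HasDerivAt (fun y : ℝ => (2*y) * Real.log b) (2 * Real.log b) x := by
      simpa using ((hasDerivAt_id x).const_mul 2).mul_const (Real.log b)
    have h2 := h1.exp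
    convert h2 using 1
    rw [Real.rpow_def_of_pos hbpos]
    ring

lemma FNaux_hasDerivAt_sum (s : Finset ℕ) (c : ℕ → ℕ → ℝ) {x : ℝ} (hx : 0 < x) :
    HasDerivAt (fun y : ℝ => ∑ q ∈ s, ∑ r ∈ s, c q r * |(q:ℝ)-(r:ℝ)| ^ (2*y))
      (∑ q ∈ s, ∑ r ∈ s, c q r * (2 * Real.log |(q:ℝ)-(r:ℝ)| * |(q:ℝ)-(r:ℝ)| ^ (2*x))) x := by
  apply HasDerivAt.fun_sum
  intro q _
  apply HasDerivAt.fun_sum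
  intro r _
  exact (FNaux_hasDerivAt_pow |(q:ℝ)-(r:ℝ)| (abs_nonneg _) hx).const_mul (c q r)

lemma FNaux_hasDerivAt_Npow (N : ℕ) (hN : 0 < N) {x : ℝ} :
    HasDerivAt (fun y : ℝ => (N:ℝ) ^ (-(2*y)))
      (-(2 * Real.log N) * (N:ℝ) ^ (-(2*x))) x := by
  have hNpos : (0:ℝ) < N := by exact_mod_cast hN
  have heq : (fun y : ℝ => (N:ℝ) ^ (-(2*y))) = fun y : ℝ => Real.exp ((-(2*y)) * Real.log N) := by
    funext y; rw [Real.rpow_def_of_pos hNpos]; ring_nf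
  rw [heq]
  have h1 : HasDerivAt (fun y : ℝ => (-(2*y)) * Real.log N) (-(2 * Real.log N)) x := by
    simpa using (((hasDerivAt_id x).const_mul 2).neg.mul_const (Real.log N))
  have h2 := h1.exp
  convert h2 using 1
  rw [Real.rpow_def_of_pos hNpos]
  ring


lemma FNauxB_one (s : Finset ℕ) (a : ℕ → ℝ) (hS0 : ∑ q ∈ s, a q = 0)
    (hS1 : ∑ q ∈ s, a q * (q:ℝ) = 0) :
    ∑ q ∈ s, ∑ r ∈ s, a q * a r * |(q : ℝ) - (r : ℝ)| ^ (2 * (1:ℝ)) = 0 := by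
  have habs : ∀ q r : ℕ, |(q:ℝ) - (r:ℝ)| ^ (2*(1:ℝ)) = ((q:ℝ) - r)^2 := by
    intro q r
    rw [mul_one, show ((2:ℝ)) = ((2:ℕ):ℝ) by norm_num, Real.rpow_natCast, sq_abs]
  have hterm : ∀ q r : ℕ, a q * a r * |(q:ℝ) - (r:ℝ)| ^ (2*(1:ℝ))
      = (a q * (q:ℝ)^2) * a r - (2 * (a q * q)) * (a r * (r:ℝ)) + a q * (a r * (r:ℝ)^2) := by
    intro q r; rw [habs]; ring
  have hinner : ∀ q : ℕ, ∑ r ∈ s, ((a q * (q:ℝ)^2) * a r - (2 * (a q * q)) * (a r * (r:ℝ)) + a q * (a r * (r:ℝ)^2))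
      = a q * (∑ r ∈ s, a r * (r:ℝ)^2) := by
    intro q
    rw [Finset.sum_add_distrib, Finset.sum_sub_distrib, ← Finset.mul_sum, ← Finset.mul_sum, ← Finset.mul_sum]
    rw [hS0, hS1]
    ring
  calc ∑ q ∈ s, ∑ r ∈ s, a q * a r * |(q : ℝ) - (r : ℝ)| ^ (2 * (1:ℝ))
      = ∑ q ∈ s, a q * (∑ r ∈ s, a r * (r:ℝ)^2) := by
        apply Finset.sum_congr rfl; intro q _
        rw [Finset.sum_congr rfl (fun r _ => hterm q r)]
        exact hinner q
    _ = (∑ q ∈ s, a q) * (∑ r ∈ s, a r * (r:ℝ)^2) := by rw [Finset.sum_mul]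
    _ = 0 := by rw [hS0, zero_mul]



lemma FNauxA_pos (s : Finset ℕ) (a : ℕ → ℝ) (hS0 : ∑ q ∈ s, a q = 0)
    (hS1 : ∑ q ∈ s, a q * (q:ℝ) = 0) (hex : ∃ q ∈ s, a q ≠ 0) :
    0 < ∑ q ∈ s, ∑ r ∈ s, a q * a r * Real.log |(q:ℝ)-(r:ℝ)| * |(q:ℝ)-(r:ℝ)| ^ (2*(1:ℝ)) := by
  obtain ⟨δ, hδ, hB⟩ := FNauxB_bound s a hS0 hex
  set B : ℝ → ℝ := fun y => ∑ q ∈ s, ∑ r ∈ s, (a q * a r) * |(q:ℝ)-(r:ℝ)| ^ (2*y) with hBdef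
  have hder : HasDerivAt B
      (∑ q ∈ s, ∑ r ∈ s, (a q * a r) * (2 * Real.log |(q:ℝ)-(r:ℝ)| * |(q:ℝ)-(r:ℝ)| ^ (2*(1:ℝ)))) 1 :=
    FNaux_hasDerivAt_sum s (fun q r => a q * a r) one_pos
  set D := ∑ q ∈ s, ∑ r ∈ s, (a q * a r) * (2 * Real.log |(q:ℝ)-(r:ℝ)| * |(q:ℝ)-(r:ℝ)| ^ (2*(1:ℝ))) with hD
  have hslope : Filter.Tendsto (slope B 1) (nhdsWithin 1 (Set.Iio 1)) (nhds D) := by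
    apply (hasDerivAt_iff_tendsto_slope.mp hder).mono_left
    apply nhdsWithin_mono
    intro y hy
    exact ne_of_lt hy
  have hev : ∀ᶠ y in nhdsWithin 1 (Set.Iio 1), δ ≤ slope B 1 y := by
    filter_upwards [Filter.inter_mem (nhdsWithin_le_nhds (eventually_gt_nhds (by norm_num : (1:ℝ)/2 < 1)))
      self_mem_nhdsWithin] with y hy
    obtain ⟨hy2, hy1⟩ := hy
    have hy1' : y < 1 := hy1
    have hBy : B y ≤ -(δ * (1-y)) := hB y (le_of_lt hy2) hy1'
    have hB1 : B 1 = 0 := FNauxB_one s a hS0 hS1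
    rw [slope_def_field, hB1, sub_zero]
    rw [div_eq_inv_mul, ← div_eq_inv_mul (B y) (y-1)]
    rw [le_div_iff_of_neg (by linarith : y - 1 < 0)]
    nlinarith
  have hDδ : δ ≤ D := ge_of_tendsto hslope hev
  have hhalf : ∑ q ∈ s, ∑ r ∈ s, a q * a r * Real.log |(q:ℝ)-(r:ℝ)| * |(q:ℝ)-(r:ℝ)| ^ (2*(1:ℝ))
      = D / 2 := by
    rw [hD, Finset.sum_div]
    apply Finset.sum_congr rfl; intro q _
    rw [Finset.sum_div]
    apply Finset.sum_congr rfl; intro r _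
    ring
  rw [hhalf]
  linarith



/-- If `N > exp(max_{x∈[1/2,1]} (∑ α_q α_r log|q-r| |q-r|^{2x}) / (∑ α_q α_r |q-r|^{2x}))`,
then `F_N(x) = (c(x)/2) N^{-2x} - S` is strictly decreasing on `[1/2,1]`, hence
`F_N(x) = 0` has at most one solution there. -/
theorem FN_strictAnti_and_unique_root (H : ℝ) (hH : H ∈ Set.Ioo (1/2 : ℝ) 1)
    (ℓ p : ℕ) (hp : 2 ≤ p) (α : ℕ → ℝ)
    (hzero : ∀ r < p, ∑ q ∈ Finset.range (ℓ + 1), α q * (q : ℝ) ^ r = 0)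
    (hne : ∑ q ∈ Finset.range (ℓ + 1), α q * (q : ℝ) ^ p ≠ 0)
    (S : ℝ) (N : ℕ)
    (hN : (N : ℝ) > Real.exp (sSup ((fun x : ℝ =>
      (∑ q ∈ Finset.range (ℓ + 1), ∑ r ∈ Finset.range (ℓ + 1),
        α q * α r * Real.log |(q : ℝ) - (r : ℝ)| * |(q : ℝ) - (r : ℝ)| ^ (2 * x)) /
      (∑ q ∈ Finset.range (ℓ + 1), ∑ r ∈ Finset.range (ℓ + 1),
        α q * α r * |(q : ℝ) - (r : ℝ)| ^ (2 * x))) '' Set.Icc (1/2 : ℝ) 1))) :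
    StrictAntiOn (fun x : ℝ =>
      ((-∑ q ∈ Finset.range (ℓ + 1), ∑ r ∈ Finset.range (ℓ + 1),
        α q * α r * |(q : ℝ) - (r : ℝ)| ^ (2 * x)) / 2) * (N : ℝ) ^ (-(2 * x)) - S)
      (Set.Icc (1/2 : ℝ) 1) ∧
    ∀ x ∈ Set.Icc (1/2 : ℝ) 1, ∀ y ∈ Set.Icc (1/2 : ℝ) 1,
      ((-∑ q ∈ Finset.range (ℓ + 1), ∑ r ∈ Finset.range (ℓ + 1),
        α q * α r * |(q : ℝ) - (r : ℝ)| ^ (2 * x)) / 2) * (N : ℝ) ^ (-(2 * x)) - S = 0 →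
      ((-∑ q ∈ Finset.range (ℓ + 1), ∑ r ∈ Finset.range (ℓ + 1),
        α q * α r * |(q : ℝ) - (r : ℝ)| ^ (2 * y)) / 2) * (N : ℝ) ^ (-(2 * y)) - S = 0 →
      x = y := by
  classical
  set s : Finset ℕ := Finset.range (ℓ + 1) with hs
  set A : ℝ → ℝ := fun x => ∑ q ∈ s, ∑ r ∈ s,
    α q * α r * Real.log |(q : ℝ) - (r : ℝ)| * |(q : ℝ) - (r : ℝ)| ^ (2 * x) with hA
  set B : ℝ → ℝ := fun x => ∑ q ∈ s, ∑ r ∈ s,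
    α q * α r * |(q : ℝ) - (r : ℝ)| ^ (2 * x) with hB
  set F : ℝ → ℝ := fun x => ((-B x) / 2) * (N : ℝ) ^ (-(2 * x)) - S with hF
  -- basic filter facts
  have hS0 : ∑ q ∈ s, α q = 0 := by simpa using hzero 0 (by omega)
  have hS1 : ∑ q ∈ s, α q * (q : ℝ) = 0 := by simpa using hzero 1 (by omega)
  have hex : ∃ q ∈ s, α q ≠ 0 := by
    by_contra h
    push_neg at h
    exact hne (Finset.sum_eq_zero (fun q hq => by rw [h q hq]; ring))
  obtain ⟨δ, hδpos, hBle⟩ := FNauxB_bound s α hS0 hex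
  have hBneg : ∀ x : ℝ, 1/2 ≤ x → x < 1 → B x < 0 := by
    intro x h1 h2
    have := hBle x h1 h2
    nlinarith
  have hA1 : 0 < A 1 := FNauxA_pos s α hS0 hS1 hex
  have hB1 : B 1 = 0 := FNauxB_one s α hS0 hS1
  have hN0 : 0 < N := by
    have h := lt_trans (Real.exp_pos _) hN
    exact_mod_cast h
  -- derivatives
  have hBder : ∀ x : ℝ, 0 < x → HasDerivAt B (2 * A x) x := by
    intro x hx
    have h := FNaux_hasDerivAt_sum s (fun q r => α q * α r) hx
    convert h using 1
    rw [hA, Finset.mul_sum]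
    apply Finset.sum_congr rfl; intro q _
    rw [Finset.mul_sum]
    apply Finset.sum_congr rfl; intro r _
    ring
  have hAcont : ∀ x : ℝ, 0 < x → ContinuousAt A x := by
    intro x hx
    exact (FNaux_hasDerivAt_sum s (fun q r => α q * α r * Real.log |(q:ℝ)-(r:ℝ)|) hx).continuousAt
  have hFder : ∀ x : ℝ, 0 < x →
      HasDerivAt F ((N:ℝ) ^ (-(2*x)) * (B x * Real.log N - A x)) x := by
    intro x hx
    have h1 := ((hBder x hx).neg.div_const 2).mul (FNaux_hasDerivAt_Npow N hN0 (x := x))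
    have h2 := h1.sub_const S
    exact (show HasDerivAt F _ x from h2).congr_deriv (by simp only [Pi.neg_apply]; ring)
  -- bddAbove of the ratio image
  have hg : BddAbove ((fun x => A x / B x) '' Set.Icc (1/2 : ℝ) 1) := by
    have hev : ∀ᶠ y in nhds (1:ℝ), 0 < A y :=
      (hAcont 1 one_pos).eventually (eventually_gt_nhds hA1)
    obtain ⟨δ₂, hδ₂pos, hδ₂⟩ := Metric.eventually_nhds_iff.mp hev
    set c0 : ℝ := max (1/2) (1 - δ₂/2) with hc0
    have hc01 : c0 < 1 := by
      rw [hc0, max_lt_iff]; constructor <;> [norm_num; linarith]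
    have hc0h : (1:ℝ)/2 ≤ c0 := le_max_left _ _
    have hgcont : ContinuousOn (fun x => A x / B x) (Set.Icc (1/2 : ℝ) c0) := by
      intro x hx
      have hx0 : (0:ℝ) < x := lt_of_lt_of_le (by norm_num) hx.1
      have hBx : B x ≠ 0 := ne_of_lt (hBneg x hx.1 (lt_of_le_of_lt hx.2 hc01))
      exact (((hAcont x hx0).continuousWithinAt).div
        ((FNaux_hasDerivAt_sum s (fun q r => α q * α r) hx0).continuousAt.continuousWithinAt) hBx)
    obtain ⟨M, hM⟩ := (isCompact_Icc.bddAbove_image hgcont)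
    refine ⟨max M 0, ?_⟩
    rintro y ⟨x, hx, rfl⟩
    rcases le_or_gt x c0 with hxc | hxc
    · exact le_trans (hM (Set.mem_image_of_mem _ ⟨hx.1, hxc⟩)) (le_max_left _ _)
    · rcases eq_or_lt_of_le hx.2 with h1 | h1
      · subst h1
        show A 1 / B 1 ≤ max M 0
        rw [hB1, div_zero]
        exact le_max_right _ _
      · have hAx : 0 < A x := by
          apply hδ₂
          rw [Real.dist_eq, abs_of_nonpos (by linarith)]
          have : 1 - δ₂/2 ≤ c0 := le_max_right _ _
          linarith
        have hBx : B x < 0 := hBneg x hx.1 h1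
        have : A x / B x ≤ 0 := div_nonpos_of_nonneg_of_nonpos (le_of_lt hAx) (le_of_lt hBx)
        exact le_trans this (le_max_right _ _)
  -- log N dominates the ratio
  have hlogN : ∀ x ∈ Set.Icc (1/2 : ℝ) 1, A x / B x < Real.log N := by
    intro x hx
    have h1 : A x / B x ≤ sSup ((fun x => A x / B x) '' Set.Icc (1/2 : ℝ) 1) :=
      le_csSup hg (Set.mem_image_of_mem _ hx)
    have h2 : sSup ((fun x => A x / B x) '' Set.Icc (1/2 : ℝ) 1) < Real.log N := by
      rw [← Real.exp_lt_exp]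
      calc Real.exp _ < (N:ℝ) := hN
        _ = Real.exp (Real.log N) := by
            rw [Real.exp_log (by exact_mod_cast hN0)]
    exact lt_of_le_of_lt h1 h2
  -- derivative negative on the interior
  have hderiv_neg : ∀ x ∈ interior (Set.Icc (1/2 : ℝ) 1), deriv F x < 0 := by
    rw [interior_Icc]
    intro x hx
    have hx0 : (0:ℝ) < x := lt_trans (by norm_num) hx.1
    have hBx : B x < 0 := hBneg x (le_of_lt hx.1) hx.2
    have hratio : A x / B x < Real.log N := hlogN x ⟨le_of_lt hx.1, le_of_lt hx.2⟩
    have hkey : B x * Real.log N - A x < 0 := by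
      have h3 : Real.log N * B x < (A x / B x) * B x :=
        (mul_lt_mul_right_of_neg hBx).mpr hratio
      rw [div_mul_cancel₀ _ (ne_of_lt hBx)] at h3
      linarith
    rw [(hFder x hx0).deriv]
    have hNpow : (0:ℝ) < (N:ℝ) ^ (-(2*x)) :=
      Real.rpow_pos_of_pos (by exact_mod_cast hN0) _
    exact mul_neg_of_pos_of_neg hNpow hkey
  have hFcont : ContinuousOn F (Set.Icc (1/2 : ℝ) 1) := by
    intro x hx
    have hx0 : (0:ℝ) < x := lt_of_lt_of_le (by norm_num) hx.1
    exact (hFder x hx0).continuousAt.continuousWithinAt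
  have hanti : StrictAntiOn F (Set.Icc (1/2 : ℝ) 1) :=
    strictAntiOn_of_deriv_neg (convex_Icc _ _) hFcont hderiv_neg
  refine ⟨hanti, ?_⟩
  intro x hx y hy hfx hfy
  have hxy : F x = F y := by
    show ((-B x) / 2) * (N : ℝ) ^ (-(2 * x)) - S = ((-B y) / 2) * (N : ℝ) ^ (-(2 * y)) - S
    rw [show ((-B x) / 2) * (N : ℝ) ^ (-(2 * x)) - S = 0 from hfx,
      show ((-B y) / 2) * (N : ℝ) ^ (-(2 * y)) - S = 0 from hfy]
  exact hanti.injOn hx hy hxy
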